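/- arXiv:2001.01552 — 2 statements merged into one kernel-verified Lean document; each statement's English description precedes it below -/
import Mathlib

section
/- Let S be a set of convex shapes in ℝ^d, let m be a positive integer, and let k = 2 d^{5/2} m. If there exist two ≤_k-incomparable shapes B₁, B₂ ∈ S, then the complete bipartite graph K_{m,m} has a 2-thin S-shaped intersection representation in ℝ^d. -/
open MeasureTheory Set Pointwise Metric Function
open scoped RealInnerProductSpace ENNReal

noncomputable section

/-- `ℝ^d` as a Euclidean space. -/
abbrev Euc (d : ℕ) := EuclideanSpace ℝ (Fin d)

/-- A shape: a compact set that is non-degenerate, i.e. not contained in a proper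
affine subspace. -/
def IsShape {d : ℕ} (B : Set (Euc d)) : Prop :=
  IsCompact B ∧ affineSpan ℝ B = ⊤

/-- `B₁ ⊑ₛ B₂`: for every `x ∈ B₂` there is a translate `B₁'` of `B₁` with `x ∈ B₁'`
and `vol (B₁' ∩ B₂) ≥ vol B₁ / s`. -/
def SqIn {d : ℕ} (s : ℝ) (B₁ B₂ : Set (Euc d)) : Prop :=
  ∀ x ∈ B₂, ∃ v : Euc d, x ∈ v +ᵥ B₁ ∧
    volume B₁ / ENNReal.ofReal s ≤ volume ((v +ᵥ B₁) ∩ B₂)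

/-- `B₁` and `B₂` are `⊑ₛ`-comparable. -/
def SqComparable {d : ℕ} (s : ℝ) (B₁ B₂ : Set (Euc d)) : Prop :=
  SqIn s B₁ B₂ ∨ SqIn s B₂ B₁

/-- `B₁ ≤ₖ B₂`: some translate of `B₁` is contained in `k • B₂`. -/
def LeK {d : ℕ} (k : ℝ) (B₁ B₂ : Set (Euc d)) : Prop :=
  ∃ v : Euc d, v +ᵥ B₁ ⊆ k • B₂

/-- `B₁ ≤_{k,s} B₂`: for every `x ∈ k • B₂` there are a translate `B₁'` of `B₁` and a
translate `B₁''` of `s • B₁` with `x ∈ B₁''` and `B₁' ⊆ B₁'' ∩ k • B₂`. -/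
def LeKS {d : ℕ} (k s : ℝ) (B₁ B₂ : Set (Euc d)) : Prop :=
  ∀ x ∈ k • B₂, ∃ v w : Euc d,
    x ∈ w +ᵥ (s • B₁) ∧ v +ᵥ B₁ ⊆ (w +ᵥ (s • B₁)) ∩ (k • B₂)

/-- An intersection representation of a graph in `ℝ^d`. -/
def IsIntersectionRep {V : Type*} {d : ℕ} (G : SimpleGraph V) (φ : V → Set (Euc d)) : Prop :=
  (∀ v, (φ v).Nonempty) ∧ ∀ u v : V, u ≠ v → ((φ u ∩ φ v).Nonempty ↔ G.Adj u v)

/-- A representation is `c`-thin if every point lies in at most `c` of the sets. -/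
def IsThin {V : Type*} {d : ℕ} (c : ℝ) (φ : V → Set (Euc d)) : Prop :=
  ∀ x : Euc d, ({v : V | x ∈ φ v}.ncard : ℝ) ≤ c

/-- A `(c,⊑ₛ)`-tame representation. -/
def IsTame {V : Type*} {d : ℕ} (c s : ℝ) (G : SimpleGraph V) (φ : V → Set (Euc d)) : Prop :=
  IsIntersectionRep G φ ∧ IsThin c φ ∧
    (∀ v, Convex ℝ (φ v) ∧ IsShape (φ v)) ∧
    ∀ u v : V, SqComparable s (φ u) (φ v)

/-- An `S`-shaped representation: each vertex is assigned a translate of a shape in `S`. -/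
def IsSShaped {V : Type*} {d : ℕ} (S : Set (Set (Euc d))) (φ : V → Set (Euc d)) : Prop :=
  ∀ v, ∃ B ∈ S, ∃ t : Euc d, φ v = t +ᵥ B

/-- `X` is a balanced separator: every component of `G - X` has at most `(2/3)|V(G)|`
vertices. -/
def IsBalancedSeparator {V : Type*} [Fintype V] (G : SimpleGraph V) (X : Set V) : Prop :=
  ∀ C : (G.induce Xᶜ).ConnectedComponent,
    (C.supp.ncard : ℝ) ≤ 2 / 3 * Fintype.card V

/-- `L_{G,≺,r}(v)`, where the linear ordering `≺` is encoded by an injective `ρ : V → ℕ`: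
the set of vertices `x ⪯ v` reachable from `v` by a path of length at most `r` all of whose
internal vertices are `≻ v`. -/
def Lset {V : Type*} (G : SimpleGraph V) (ρ : V → ℕ) (r : ℕ) (v : V) : Set V :=
  {x | ρ x ≤ ρ v ∧ ∃ p : G.Walk v x, p.IsPath ∧ p.length ≤ r ∧
    ∀ z ∈ p.support, z ≠ v → z ≠ x → ρ v < ρ z}

/-- The height of a set: the least `h ≥ 0` such that the set lies between two parallel
hyperplanes at distance `h`. -/
def heightOf {d : ℕ} (B : Set (Euc d)) : ℝ :=
  sInf {h : ℝ | 0 ≤ h ∧ ∃ u : Euc d, ‖u‖ = 1 ∧ ∃ a : ℝ,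
    ∀ x ∈ B, a ≤ (inner ℝ u x : ℝ) ∧ (inner ℝ u x : ℝ) ≤ a + h}

/-- A parallelepiped with center `p` and sides `v₁, …, v_d`. -/
def IsParallelepiped {d : ℕ} (T : Set (Euc d)) : Prop :=
  ∃ (p : Euc d) (v : Fin d → Euc d), LinearIndependent ℝ v ∧
    T = {x | ∃ α : Fin d → ℝ, (∀ i, α i ∈ Set.Icc (-1 : ℝ) 1) ∧ x = p + ∑ i, α i • v i}

/-- `T` is an envelope of `B`: a parallelepiped of smallest volume containing `B`. -/
def IsEnvelope {d : ℕ} (T B : Set (Euc d)) : Prop :=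
  IsParallelepiped T ∧ B ⊆ T ∧
    ∀ T' : Set (Euc d), IsParallelepiped T' → B ⊆ T' → volume T ≤ volume T'

/-- A box in `ℝ^d`: a product of `d` closed intervals. -/
def IsBox {d : ℕ} (B : Set (Euc d)) : Prop :=
  ∃ a b : Fin d → ℝ, B = {x : Euc d | ∀ i, x i ∈ Set.Icc (a i) (b i)}

/-- `Q` is `k'`-fat: every ball `B` centered in `Q` satisfies
`vol (B ∩ Q) ≥ min (vol B / k') (vol Q)`. -/
def IsFat {d : ℕ} (k' : ℝ) (Q : Set (Euc d)) : Prop :=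
  ∀ x ∈ Q, ∀ ρ : ℝ, 0 < ρ →
    min (volume (Metric.closedBall x ρ) / ENNReal.ofReal k') (volume Q)
      ≤ volume (Metric.closedBall x ρ ∩ Q)

/-- The strong product of two simple graphs. -/
def strongProd {α β : Type*} (G : SimpleGraph α) (H : SimpleGraph β) :
    SimpleGraph (α × β) where
  Adj x y := x ≠ y ∧ (x.1 = y.1 ∨ G.Adj x.1 y.1) ∧ (x.2 = y.2 ∨ H.Adj x.2 y.2)
  symm := by
    refine ⟨?_⟩
    rintro ⟨a1, a2⟩ ⟨b1, b2⟩ ⟨hne, h1, h2⟩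
    refine ⟨hne.symm, ?_, ?_⟩
    · rcases h1 with h | h
      · exact Or.inl h.symm
      · exact Or.inr h.symm
    · rcases h2 with h | h
      · exact Or.inl h.symm
      · exact Or.inr h.symm
  loopless := by
    refine ⟨?_⟩
    rintro ⟨a1, a2⟩ ⟨hne, -, -⟩
    exact hne rfl

/-- The graph `G⁺(N, l)`: add hubs `v₁, …, v_N` and internally disjoint paths of length `l`
from each hub to each vertex of `G`.  The internal vertices of the path from hub `i` to
vertex `u` are `(i, u, 0), …, (i, u, l-2)`. -/
def plusGraph {V : Type*} (G : SimpleGraph V) (N l : ℕ) :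
    SimpleGraph (V ⊕ (Fin N ⊕ Fin N × V × Fin (l - 1))) :=
  SimpleGraph.fromRel (fun x y =>
    match x, y with
    | Sum.inl u, Sum.inl w => G.Adj u w
    | Sum.inr (Sum.inl _), Sum.inl _ => l = 1
    | Sum.inr (Sum.inl i), Sum.inr (Sum.inr (j, _, t)) => i = j ∧ (t : ℕ) = 0
    | Sum.inr (Sum.inr (i, u, t)), Sum.inr (Sum.inr (j, w, t')) =>
        i = j ∧ u = w ∧ (t' : ℕ) = (t : ℕ) + 1
    | Sum.inr (Sum.inr (_, u, t)), Sum.inl w => u = w ∧ (t : ℕ) = l - 2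
    | _, _ => False)

/-- `γ_d`: the supremum over affine hyperplanes `H` of the `(d-1)`-dimensional Hausdorff
measure of the intersection of `H` with the unit cube. -/
def gammaConst (d : ℕ) : ℝ :=
  sSup {γ : ℝ | ∃ (u : Euc d) (a : ℝ), ‖u‖ = 1 ∧
    γ = (MeasureTheory.Measure.hausdorffMeasure ((d : ℝ) - 1)
      ({x : Euc d | (inner ℝ u x : ℝ) = a} ∩ {x : Euc d | ∀ i, x i ∈ Set.Icc (0 : ℝ) 1})).toReal}

/-- The sequence `ℓ_h`: `ℓ_1 = 1` and `ℓ_{h+1} = ℓ_h / (2(h+1))`. -/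
def ellSeq : ℕ → ℝ
  | 0 => 2
  | n + 1 => ellSeq n / (2 * (n + 1))

/-- The trapezoid `T_h` with vertices `(0,0)`, `(ℓ_h,0)`, `(ℓ_h, hℓ_h)`, `(0, 2hℓ_h)`. -/
def trapezoidShape (h : ℕ) : Set (Euc 2) :=
  convexHull ℝ {(!₂[0, 0] : Euc 2), !₂[ellSeq h, 0], !₂[ellSeq h, h * ellSeq h],
    !₂[0, 2 * h * ellSeq h]}

/-- An axis-aligned square `S_h` with sides of length `ℓ_h`. -/
def squareShape (h : ℕ) : Set (Euc 2) :=
  {x : Euc 2 | x 0 ∈ Set.Icc 0 (ellSeq h) ∧ x 1 ∈ Set.Icc 0 (ellSeq h)}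

/-- The set `S*` of shapes. -/
def SStar : Set (Set (Euc 2)) :=
  {B | ∃ h : ℕ, 0 < h ∧ (B = trapezoidShape h ∨ B = squareShape h)}

/-- A class of finite graphs is `⊑`-representable. -/
def SqRepresentable (𝒢 : ∀ V : Type, Fintype V → SimpleGraph V → Prop) : Prop :=
  ∃ d c s : ℕ, 0 < d ∧ 0 < c ∧ 0 < s ∧
    ∀ (V : Type) (instV : Fintype V) (G : SimpleGraph V), 𝒢 V instV G →
      ∃ S : Set (Set (Euc d)), (∀ B ∈ S, Convex ℝ B ∧ IsShape B) ∧
        S.Pairwise (SqComparable (s : ℝ)) ∧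
        ∃ φ : V → Set (Euc d), IsIntersectionRep G φ ∧ IsThin (c : ℝ) φ ∧ IsSShaped S φ

end

noncomputable section AuxStmt3

namespace Stmt3Aux

open Finset Matrix

variable {d : ℕ}

/-- The width of a set with respect to a linear functional. -/
def wid (B : Set (Euc d)) (L : Euc d →ₗ[ℝ] ℝ) : ℝ :=
  sSup (L '' B) - sInf (L '' B)

lemma exists_wid_spec {B : Set (Euc d)} (hc : IsCompact B) (hne : B.Nonempty)
    (L : Euc d →ₗ[ℝ] ℝ) :
    ∃ p ∈ B, ∃ q ∈ B, wid B L = L p - L q ∧ (∀ x ∈ B, L x ≤ L p) ∧ (∀ x ∈ B, L q ≤ L x) := by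
  have hLc : Continuous L := L.continuous_of_finiteDimensional
  obtain ⟨p, hp, hpmax⟩ := hc.exists_isMaxOn hne hLc.continuousOn
  obtain ⟨q, hq, hqmin⟩ := hc.exists_isMinOn hne hLc.continuousOn
  have hpmax' : ∀ x ∈ B, L x ≤ L p := fun x hx => hpmax hx
  have hqmin' : ∀ x ∈ B, L q ≤ L x := fun x hx => hqmin hx
  refine ⟨p, hp, q, hq, ?_, hpmax', hqmin'⟩
  have h1 : sSup (L '' B) = L p :=
    IsGreatest.csSup_eq ⟨⟨p, hp, rfl⟩, by rintro _ ⟨x, hx, rfl⟩; exact hpmax' x hx⟩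
  have h2 : sInf (L '' B) = L q :=
    IsLeast.csInf_eq ⟨⟨q, hq, rfl⟩, by rintro _ ⟨x, hx, rfl⟩; exact hqmin' x hx⟩
  rw [wid, h1, h2]

lemma wid_nonneg {B : Set (Euc d)} (hc : IsCompact B) (hne : B.Nonempty)
    (L : Euc d →ₗ[ℝ] ℝ) : 0 ≤ wid B L := by
  obtain ⟨p, hp, q, hq, heq, hmax, _⟩ := exists_wid_spec hc hne L
  have := hmax q hq
  linarith [heq]

lemma euc_sum_apply {n : ℕ} (s : Finset (Fin n)) (f : Fin n → Euc d) (j : Fin d) :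
    (∑ i ∈ s, f i) j = ∑ i ∈ s, f i j := by
  induction s using Finset.cons_induction with
  | empty => rw [Finset.sum_empty, Finset.sum_empty]; rfl
  | cons a s ha ih => rw [Finset.sum_cons, Finset.sum_cons, ← ih]; rfl

/-- The homogeneous matrix of a `(d+1)`-tuple of points. -/
def homMat (v : Fin (d + 1) → Euc d) : Matrix (Fin (d + 1)) (Fin (d + 1)) ℝ :=
  Matrix.of fun i => Fin.cons 1 fun j => v i j

lemma vecMul_homMat (c : Fin (d + 1) → ℝ) (v : Fin (d + 1) → Euc d) :
    c ᵥ* homMat v = Fin.cons (∑ i, c i) fun j => ∑ i, c i * v i j := by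
  funext col
  induction col using Fin.cases with
  | zero => simp [Matrix.vecMul, dotProduct, homMat]
  | succ j => simp [Matrix.vecMul, dotProduct, homMat]

lemma affineIndependent_iff_det_ne_zero (v : Fin (d + 1) → Euc d) :
    AffineIndependent ℝ v ↔ (homMat v).det ≠ 0 := by
  classical
  constructor
  · intro hInd hdet
    obtain ⟨c, hc0, hcM⟩ := Matrix.exists_vecMul_eq_zero_iff.mpr hdet
    rw [vecMul_homMat] at hcM
    have h0 : ∑ i, c i = 0 := by
      have := congrFun hcM 0
      simpa using this
    have hsucc : ∀ j : Fin d, ∑ i, c i * v i j = 0 := by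
      intro j
      have := congrFun hcM j.succ
      simpa using this
    have hcomb : ∑ i, c i • v i = 0 := by
      ext j
      show (∑ i, c i • v i) j = (0 : ℝ)
      rw [euc_sum_apply]
      exact hsucc j
    have : ∀ e ∈ Finset.univ, c e = 0 :=
      affineIndependent_iff.mp hInd Finset.univ c h0 hcomb
    exact hc0 (funext fun i => this i (Finset.mem_univ i))
  · intro hdet
    rw [affineIndependent_iff]
    intro s w hw hcomb e he
    set w' := (fun i => if i ∈ s then w i else 0 : Fin (d + 1) → ℝ) with hw'
    have hw'sum : ∑ i, w' i = 0 := by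
      rw [hw']
      rw [Finset.sum_ite_mem, Finset.univ_inter]
      exact hw
    have hw'comb : ∑ i, w' i • v i = 0 := by
      rw [hw']
      simp only [ite_smul, zero_smul]
      rw [Finset.sum_ite_mem, Finset.univ_inter]
      exact hcomb
    have hvm : w' ᵥ* homMat v = 0 := by
      rw [vecMul_homMat]
      funext col
      induction col using Fin.cases with
      | zero => simpa using hw'sum
      | succ j =>
        have : (∑ i, w' i • v i) j = (0 : ℝ) := by rw [hw'comb]; rfl
        rw [euc_sum_apply] at this
        simpa using this
    have hw'0 : w' = 0 := by
      by_contra hne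
      exact hdet (Matrix.exists_vecMul_eq_zero_iff.mp ⟨w', hne, hvm⟩)
    have := congrFun hw'0 e
    simpa [hw', he] using this

set_option maxHeartbeats 1000000 in
lemma step1 {B₁ B₂ : Set (Euc d)}
    (h₁c : IsCompact B₁) (h₁ne : B₁.Nonempty)
    (h₂conv : Convex ℝ B₂) (h₂c : IsCompact B₂) (h₂span : affineSpan ℝ B₂ = ⊤)
    {t : ℝ} (ht : 0 < t)
    (h : ¬ LeK (2 * ((d : ℝ) + 1) * t) B₁ B₂) :
    ∃ L : Euc d →ₗ[ℝ] ℝ, t * wid B₂ L < wid B₁ L := by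
  classical
  by_contra hcon
  push_neg at hcon
  apply h
  have h₂ne : B₂.Nonempty := by
    rw [← affineSpan_nonempty (k := ℝ), h₂span]
    exact ⟨0, AffineSubspace.mem_top ℝ (Euc d) 0⟩
  -- an affine basis inside B₂
  obtain ⟨s, hsB, hspan, hind⟩ := exists_affineIndependent ℝ (Euc d) B₂
  rw [h₂span] at hspan
  haveI : Finite ↥s := finite_of_fin_dim_affineIndependent ℝ hind
  haveI : Fintype ↥s := Fintype.ofFinite _
  have hrange : Set.range ((↑) : s → Euc d) = s := Subtype.range_coe
  have hcard : Fintype.card ↥s = d + 1 := by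
    have := hind.affineSpan_eq_top_iff_card_eq_finrank_add_one.mp (by rwa [hrange])
    simpa [finrank_euclideanSpace_fin] using this
  let eqv : ↥s ≃ Fin (d + 1) := Fintype.equivFinOfCardEq hcard
  set v₀ : Fin (d + 1) → Euc d := fun i => ((eqv.symm i : ↥s) : Euc d) with hv₀
  have hv₀B : ∀ i, v₀ i ∈ B₂ := fun i => hsB (eqv.symm i).2
  have hv₀ind : AffineIndependent ℝ v₀ :=
    (affineIndependent_equiv eqv.symm).mpr hind
  -- maximize the determinant over tuples from B₂
  set K : Set (Fin (d + 1) → Euc d) := Set.pi Set.univ fun _ => B₂ with hKdef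
  have hKc : IsCompact K := isCompact_univ_pi fun _ => h₂c
  have hKne : K.Nonempty := ⟨v₀, fun i _ => hv₀B i⟩
  have hgc : Continuous fun v : Fin (d + 1) → Euc d => |(homMat v).det| := by
    apply Continuous.abs
    apply Continuous.matrix_det
    apply continuous_matrix
    intro i j
    induction j using Fin.cases with
    | zero =>
      simp only [homMat, Matrix.of_apply, Fin.cons_zero]
      exact continuous_const
    | succ j' =>
      simp only [homMat, Matrix.of_apply, Fin.cons_succ]
      exact (EuclideanSpace.proj j').continuous.comp (continuous_apply i)
  obtain ⟨v, hvK, hvmax⟩ := hKc.exists_isMaxOn hKne hgc.continuousOn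
  have hvmax' : ∀ u ∈ K, |(homMat u).det| ≤ |(homMat v).det| := fun u hu => hvmax hu
  have hvB : ∀ i, v i ∈ B₂ := fun i => hvK i (Set.mem_univ i)
  have hdet0 : (homMat v₀).det ≠ 0 := (affineIndependent_iff_det_ne_zero v₀).mp hv₀ind
  have hdetv : (homMat v).det ≠ 0 := by
    intro h0
    have h1 := hvmax' v₀ fun i _ => hv₀B i
    rw [h0] at h1
    simp only [abs_zero] at h1
    exact hdet0 (abs_eq_zero.mp (le_antisymm h1 (abs_nonneg _)))
  have hvind : AffineIndependent ℝ v := (affineIndependent_iff_det_ne_zero v).mpr hdetv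
  have hvtop : affineSpan ℝ (Set.range v) = ⊤ :=
    hvind.affineSpan_eq_top_iff_card_eq_finrank_add_one.mpr
      (by simp [finrank_euclideanSpace_fin])
  let b : AffineBasis (Fin (d + 1)) ℝ (Euc d) := ⟨v, hvind, hvtop⟩
  have hbv : ∀ i, b i = v i := fun i => rfl
  -- barycentric coordinates are bounded by 1 in absolute value on B₂
  have hcoord : ∀ x ∈ B₂, ∀ i, |b.coord i x| ≤ 1 := by
    intro x hx i
    have hupd : Function.update v i x ∈ K := by
      intro i' _
      by_cases hii : i' = i
      · subst hii; rw [Function.update_self]; exact hx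
      · rw [Function.update_of_ne hii]; exact hvB i'
    have hrow : homMat (Function.update v i x) =
        (homMat v).updateRow i (Fin.cons 1 fun j => x j) := by
      funext i' j'
      by_cases hii : i' = i
      · subst hii
        simp [homMat, Matrix.updateRow_apply, Function.update_self]
      · simp [homMat, Matrix.updateRow_apply, hii, Function.update_of_ne hii]
    have hcons : (Fin.cons 1 (fun j => x j) : Fin (d + 1) → ℝ) =
        ∑ j, b.coord j x • (homMat v) j := by
      funext col
      rw [Finset.sum_apply]
      induction col using Fin.cases with
      | zero =>
        simp only [Fin.cons_zero, Pi.smul_apply, homMat, Matrix.of_apply, smul_eq_mul,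
          mul_one]
        exact (b.sum_coord_apply_eq_one x).symm
      | succ j' =>
        simp only [Fin.cons_succ, Pi.smul_apply, homMat, Matrix.of_apply, smul_eq_mul]
        have hxx := b.linear_combination_coord_eq_self x
        have h2 : (∑ j, b.coord j x • b j) j' = x j' := by rw [hxx]
        rw [euc_sum_apply] at h2
        exact h2.symm
    have hdetu : (homMat (Function.update v i x)).det = b.coord i x * (homMat v).det := by
      rw [hrow, hcons, Matrix.det_updateRow_sum]
      simp [smul_eq_mul]
    have hle := hvmax' _ hupd
    rw [hdetu, abs_mul] at hle
    have habs : 0 < |(homMat v).det| := abs_pos.mpr hdetv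
    exact le_of_mul_le_mul_right (by rwa [one_mul]) habs
  -- the linear parts of the coordinates
  set lam : Fin (d + 1) → (Euc d →ₗ[ℝ] ℝ) := fun i => (b.coord i).linear with hlam
  have hldiff : ∀ i (x y : Euc d), lam i (x - y) = b.coord i x - b.coord i y := by
    intro i x y
    have h1 := (b.coord i).map_vadd y (x - y)
    rw [vadd_eq_add, sub_add_cancel, vadd_eq_add] at h1
    rw [hlam]
    linarith [h1]
  have hsum0 : ∀ u : Euc d, ∑ i, lam i u = 0 := by
    intro u
    have h1 : ∀ i, lam i u = b.coord i u - b.coord i 0 := by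
      intro i
      have := hldiff i u 0
      rwa [sub_zero] at this
    rw [Finset.sum_congr rfl fun i _ => h1 i, Finset.sum_sub_distrib,
      b.sum_coord_apply_eq_one u, b.sum_coord_apply_eq_one 0, sub_self]
  have hw2 : ∀ i, wid B₂ (lam i) ≤ 2 := by
    intro i
    obtain ⟨p, hp, q, hq, heq, -, -⟩ := exists_wid_spec h₂c h₂ne (lam i)
    have h1 := abs_le.mp (hcoord p hp i)
    have h2 := abs_le.mp (hcoord q hq i)
    have h3 : lam i p - lam i q = b.coord i p - b.coord i q := by
      rw [← map_sub, hldiff]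
    rw [heq]
    linarith [h1.1, h1.2, h2.1, h2.2]
  have hw1 : ∀ i, wid B₁ (lam i) ≤ 2 * t :=
    fun i => le_trans (hcon _) (by nlinarith [hw2 i])
  obtain ⟨x₀, hx₀⟩ := id h₁ne
  have hqex := fun i : Fin (d + 1) => exists_wid_spec h₁c h₁ne (lam i)
  choose pp hpp qq hqq heqw hmaxw hminw using hqex
  set cc : ℝ := 2 * ((d : ℝ) + 1) * t with hcc
  have hccpos : 0 < cc := by positivity
  set r : Fin (d + 1) → ℝ := fun i => cc * b.coord i 0 + lam i (qq i) with hr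
  have hrsum : 0 ≤ ∑ i, r i := by
    have h1 : ∑ i, r i = cc + ∑ i, lam i (qq i) := by
      rw [hr, Finset.sum_add_distrib, ← Finset.mul_sum, b.sum_coord_apply_eq_one, mul_one]
    have h2 : ∀ i, lam i x₀ - 2 * t ≤ lam i (qq i) := by
      intro i
      have hxb : lam i x₀ ≤ lam i (pp i) := hmaxw i x₀ hx₀
      have h3 : wid B₁ (lam i) = lam i (pp i) - lam i (qq i) := heqw i
      have h4 := hw1 i
      linarith
    have h3 : ∑ i, (lam i x₀ - 2 * t) ≤ ∑ i, lam i (qq i) :=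
      Finset.sum_le_sum fun i _ => h2 i
    have h4 : ∑ i, (lam i x₀ - 2 * t) = -cc := by
      rw [Finset.sum_sub_distrib, hsum0 x₀, Finset.sum_const, Finset.card_univ,
        Fintype.card_fin, hcc]
      push_cast
      ring
    linarith
  set ξ : Fin (d + 1) → ℝ := fun i => r i - (∑ j, r j) / ((d : ℝ) + 1) with hξ
  have hd1 : ((d : ℝ) + 1) ≠ 0 := by positivity
  have hξsum : ∑ i, ξ i = 0 := by
    rw [hξ, Finset.sum_sub_distrib, Finset.sum_const, Finset.card_univ, Fintype.card_fin,
      nsmul_eq_mul]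
    push_cast
    field_simp
    ring
  have hξle : ∀ i, ξ i ≤ r i := by
    intro i
    have h0 : 0 ≤ (∑ j, r j) / ((d : ℝ) + 1) := by positivity
    rw [hξ]
    dsimp only
    linarith
  set T : Euc d →ₗ[ℝ] (Fin d → ℝ) := LinearMap.pi (fun j : Fin d => lam j.succ) with hT
  have hTinj : Function.Injective T := by
    intro a a' haa
    have hTz : T (a - a') = 0 := by rw [map_sub, haa, sub_self]
    have hz : ∀ j : Fin d, lam j.succ (a - a') = 0 := fun j => congrFun hTz j
    have hz0 : lam 0 (a - a') = 0 := by
      have h1 := hsum0 (a - a')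
      rw [Fin.sum_univ_succ] at h1
      simpa [hz] using h1
    have hzall : ∀ i, lam i (a - a') = 0 := fun i => Fin.cases hz0 hz i
    have hco : ∀ i, b.coord i a = b.coord i a' := by
      intro i
      have := hldiff i a a'
      rw [hzall i] at this
      linarith
    exact b.ext_elem hco
  have hTsurj : Function.Surjective T := by
    have hfr : Module.finrank ℝ (Euc d) = Module.finrank ℝ (Fin d → ℝ) := by
      simp [finrank_euclideanSpace_fin, Module.finrank_fintype_fun_eq_card]
    exact (LinearMap.injective_iff_surjective_of_finrank_eq_finrank hfr).mp hTinj
  obtain ⟨u, hu⟩ := hTsurj fun j => ξ j.succ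
  have hsucc : ∀ j : Fin d, lam j.succ u = ξ j.succ := fun j => congrFun hu j
  have hlamu : ∀ i, lam i u = ξ i := by
    intro i
    refine Fin.cases ?_ hsucc i
    have h1 := hsum0 u
    rw [Fin.sum_univ_succ] at h1
    have h2 := hξsum
    rw [Fin.sum_univ_succ] at h2
    have h3 : ∑ j : Fin d, lam (Fin.succ j) u = ∑ j : Fin d, ξ j.succ :=
      Finset.sum_congr rfl fun j _ => hsucc j
    linarith
  refine ⟨-u, ?_⟩
  intro z hz
  have hxB : u + z ∈ B₁ := by
    rwa [Set.mem_vadd_set_iff_neg_vadd_mem, neg_neg, vadd_eq_add] at hz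
  set y : Euc d := cc⁻¹ • z with hy
  have hyc : ∀ i, 0 ≤ b.coord i y := by
    intro i
    have h1 : b.coord i y = b.coord i 0 + lam i y := by
      have := hldiff i y 0
      rw [sub_zero] at this
      linarith
    have h2 : lam i y = cc⁻¹ * (lam i (u + z) - ξ i) := by
      rw [hy, LinearMap.map_smul, smul_eq_mul]
      have : lam i (u + z) = lam i u + lam i z := map_add _ _ _
      rw [this, hlamu i]
      ring
    have h3 : r i ≤ lam i (u + z) + cc * b.coord i 0 := by
      rw [hr]
      dsimp only
      have := hminw i (u + z) hxB
      linarith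
    have h4 : ξ i ≤ r i := hξle i
    have h5 : -(cc * b.coord i 0) ≤ lam i (u + z) - ξ i := by linarith
    have h6 : cc⁻¹ * -(cc * b.coord i 0) ≤ cc⁻¹ * (lam i (u + z) - ξ i) :=
      mul_le_mul_of_nonneg_left h5 (by positivity)
    have h7 : cc⁻¹ * -(cc * b.coord i 0) = -b.coord i 0 := by
      rw [mul_neg, ← mul_assoc, inv_mul_cancel₀ (ne_of_gt hccpos), one_mul]
    rw [h1, h2]
    linarith
  have hymem : y ∈ B₂ := by
    have h8 := b.affineCombination_coord_eq_self y
    have h9 : (Finset.univ.affineCombination ℝ (b : Fin (d + 1) → Euc d) fun i =>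
        b.coord i y) ∈ convexHull ℝ (Set.range (b : Fin (d + 1) → Euc d)) :=
      affineCombination_mem_convexHull (fun i _ => hyc i) (b.sum_coord_apply_eq_one y)
    rw [h8] at h9
    have h10 : convexHull ℝ (Set.range (b : Fin (d + 1) → Euc d)) ⊆ B₂ :=
      convexHull_min (by rintro _ ⟨i, rfl⟩; exact hvB i) h₂conv
    exact h10 h9
  have hzcy : z = cc • y := by rw [hy, smul_inv_smul₀ (ne_of_gt hccpos)]
  rw [hzcy]
  exact Set.smul_mem_smul_set hymem

lemma one_le_abs_sub {a b : ℕ} (h : a ≠ b) : (1 : ℝ) ≤ |(a : ℝ) - (b : ℝ)| := by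
  rcases Nat.lt_or_ge a b with hlt | hge
  · have h1 : (a : ℝ) + 1 ≤ b := by exact_mod_cast hlt
    rw [abs_sub_comm, abs_of_nonneg (by linarith)]
    linarith
  · have hlt : b < a := lt_of_le_of_ne hge (Ne.symm h)
    have h1 : (b : ℝ) + 1 ≤ a := by exact_mod_cast hlt
    rw [abs_of_nonneg (by linarith)]
    linarith

set_option maxHeartbeats 1000000 in
lemma construct {m : ℕ} (hm : 0 < m) {B₁ B₂ : Set (Euc d)}
    (h₁conv : Convex ℝ B₁) (h₁c : IsCompact B₁) (h₁ne : B₁.Nonempty)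
    (h₂conv : Convex ℝ B₂) (h₂c : IsCompact B₂) (h₂ne : B₂.Nonempty)
    {L₁ L₂ : Euc d →ₗ[ℝ] ℝ}
    (hw₁ : (m : ℝ) * wid B₂ L₁ < wid B₁ L₁)
    (hw₂ : (m : ℝ) * wid B₁ L₂ < wid B₂ L₂) :
    ∃ φ : Fin m ⊕ Fin m → Set (Euc d),
      IsIntersectionRep (completeBipartiteGraph (Fin m) (Fin m)) φ ∧ IsThin 2 φ ∧
      (∀ i, ∃ t : Euc d, φ (Sum.inl i) = t +ᵥ B₁) ∧ (∀ j, ∃ t : Euc d, φ (Sum.inr j) = t +ᵥ B₂) := by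
  classical
  have i0 : Fin m := ⟨0, hm⟩
  obtain ⟨xp, hxp, xm, hxm, he₁, hmax₁, hmin₁⟩ := exists_wid_spec h₁c h₁ne L₁
  obtain ⟨yp, hyp, ym, hym, he₂, hmax₂, hmin₂⟩ := exists_wid_spec h₂c h₂ne L₂
  obtain ⟨pB, hpB, qB, hqB, heB, hmaxB, hminB⟩ := exists_wid_spec h₁c h₁ne L₂
  obtain ⟨pC, hpC, qC, hqC, heC, hmaxC, hminC⟩ := exists_wid_spec h₂c h₂ne L₁
  have hm' : (0 : ℝ) < m := by exact_mod_cast hm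
  have hwB₁L₂ : 0 ≤ wid B₁ L₂ := wid_nonneg h₁c h₁ne L₂
  have hwB₂L₁ : 0 ≤ wid B₂ L₁ := wid_nonneg h₂c h₂ne L₁
  have hw₁pos : 0 < wid B₁ L₁ := lt_of_le_of_lt (by positivity) hw₁
  have hw₂pos : 0 < wid B₂ L₂ := lt_of_le_of_lt (by positivity) hw₂
  set c : Fin m → ℝ := fun i => ((i : ℝ) + 1 / 2) / m with hcdef
  have hc0 : ∀ i, 0 ≤ c i := by
    intro i
    apply div_nonneg _ (le_of_lt hm')
    positivity
  have hc1 : ∀ i, c i ≤ 1 := by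
    intro i
    rw [hcdef]
    have h1 : ((i : ℕ) : ℝ) + 1 ≤ m := by exact_mod_cast i.isLt
    rw [div_le_one hm']
    linarith
  have hcd : ∀ i i' : Fin m, i ≠ i' → 1 / (m : ℝ) ≤ |c i - c i'| := by
    intro i i' hne
    have h1 : c i - c i' = ((i : ℝ) - (i' : ℝ)) / m := by rw [hcdef]; ring
    have h2 : (1 : ℝ) ≤ |(i : ℝ) - (i' : ℝ)| :=
      one_le_abs_sub (fun h => hne (Fin.ext h))
    rw [h1, abs_div, abs_of_pos hm', div_le_div_iff₀ hm' hm']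
    nlinarith
  set e : Euc d := xp - xm with hedef
  set f : Euc d := yp - ym with hfdef
  have hL₁e : L₁ e = wid B₁ L₁ := by rw [hedef, map_sub, ← he₁]
  have hL₂f : L₂ f = wid B₂ L₂ := by rw [hfdef, map_sub, ← he₂]
  set φ : Fin m ⊕ Fin m → Set (Euc d) :=
    Sum.elim (fun i => c i • f +ᵥ B₁) (fun j => (xm - ym + c j • e) +ᵥ B₂) with hφ
  have hmemA : ∀ (i : Fin m) (x : Euc d), x ∈ φ (Sum.inl i) ↔ x - c i • f ∈ B₁ := by
    intro i x
    rw [hφ]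
    simp only [Sum.elim_inl]
    rw [Set.mem_vadd_set_iff_neg_vadd_mem, vadd_eq_add, neg_add_eq_sub]
  have hmemC : ∀ (j : Fin m) (x : Euc d),
      x ∈ φ (Sum.inr j) ↔ x - (xm - ym + c j • e) ∈ B₂ := by
    intro j x
    rw [hφ]
    simp only [Sum.elim_inr]
    rw [Set.mem_vadd_set_iff_neg_vadd_mem, vadd_eq_add, neg_add_eq_sub]
  -- disjointness of the B₁-translates
  have hdisA : ∀ i i' : Fin m, i ≠ i' → ∀ x, x ∈ φ (Sum.inl i) → x ∈ φ (Sum.inl i') → False := by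
    intro i i' hne x hx hx'
    rw [hmemA] at hx hx'
    have hv1 : L₂ (x - c i • f) - L₂ (x - c i' • f) = (c i' - c i) * wid B₂ L₂ := by
      rw [map_sub, map_sub, LinearMap.map_smul, LinearMap.map_smul, smul_eq_mul,
        smul_eq_mul, hL₂f]
      ring
    have hb1 : L₂ (x - c i • f) - L₂ (x - c i' • f) ≤ wid B₁ L₂ := by
      have := hmaxB _ hx
      have := hminB _ hx'
      linarith [heB]
    have hb2 : L₂ (x - c i' • f) - L₂ (x - c i • f) ≤ wid B₁ L₂ := by
      have := hmaxB _ hx'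
      have := hminB _ hx
      linarith [heB]
    have habs : |c i' - c i| * wid B₂ L₂ ≤ wid B₁ L₂ := by
      rcases abs_cases (c i' - c i) with ⟨hh, -⟩ | ⟨hh, -⟩
      · rw [hh]; linarith [hv1, hb1]
      · rw [hh]; nlinarith [hv1, hb2]
    have hcd' := hcd i' i (Ne.symm hne)
    have : (1 / (m : ℝ)) * wid B₂ L₂ ≤ wid B₁ L₂ :=
      le_trans (mul_le_mul_of_nonneg_right hcd' (le_of_lt hw₂pos)) habs
    have hfin : wid B₂ L₂ ≤ (m : ℝ) * wid B₁ L₂ := by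
      rw [div_mul_eq_mul_div, one_mul] at this
      rw [div_le_iff₀ hm'] at this
      linarith [this]
    linarith
  -- disjointness of the B₂-translates
  have hdisC : ∀ j j' : Fin m, j ≠ j' → ∀ x, x ∈ φ (Sum.inr j) → x ∈ φ (Sum.inr j') → False := by
    intro j j' hne x hx hx'
    rw [hmemC] at hx hx'
    have hv1 : L₁ (x - (xm - ym + c j • e)) - L₁ (x - (xm - ym + c j' • e)) =
        (c j' - c j) * wid B₁ L₁ := by
      rw [map_sub, map_sub, map_add, map_add, LinearMap.map_smul, LinearMap.map_smul,
        smul_eq_mul, smul_eq_mul, hL₁e]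
      ring
    have hb1 : L₁ (x - (xm - ym + c j • e)) - L₁ (x - (xm - ym + c j' • e)) ≤ wid B₂ L₁ := by
      have := hmaxC _ hx
      have := hminC _ hx'
      linarith [heC]
    have hb2 : L₁ (x - (xm - ym + c j' • e)) - L₁ (x - (xm - ym + c j • e)) ≤ wid B₂ L₁ := by
      have := hmaxC _ hx'
      have := hminC _ hx
      linarith [heC]
    have habs : |c j' - c j| * wid B₁ L₁ ≤ wid B₂ L₁ := by
      rcases abs_cases (c j' - c j) with ⟨hh, -⟩ | ⟨hh, -⟩
      · rw [hh]; linarith [hv1, hb1]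
      · rw [hh]; nlinarith [hv1, hb2]
    have hcd' := hcd j' j (Ne.symm hne)
    have : (1 / (m : ℝ)) * wid B₁ L₁ ≤ wid B₂ L₁ :=
      le_trans (mul_le_mul_of_nonneg_right hcd' (le_of_lt hw₁pos)) habs
    have hfin : wid B₁ L₁ ≤ (m : ℝ) * wid B₂ L₁ := by
      rw [div_mul_eq_mul_div, one_mul] at this
      rw [div_le_iff₀ hm'] at this
      linarith [this]
    linarith
  -- common points
  have hz : ∀ i j : Fin m,
      (xm + c j • e + c i • f) ∈ φ (Sum.inl i) ∩ φ (Sum.inr j) := by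
    intro i j
    constructor
    · rw [hmemA, add_sub_cancel_right]
      have h1 : (0 : ℝ) ≤ 1 - c j := by linarith [hc1 j]
      have h2 := h₁conv hxm hxp h1 (hc0 j) (by ring)
      have h3 : (1 - c j) • xm + c j • xp = xm + c j • e := by
        rw [hedef, smul_sub, sub_smul, one_smul]
        abel
      rwa [h3] at h2
    · rw [hmemC]
      have h4 : xm + c j • e + c i • f - (xm - ym + c j • e) = ym + c i • f := by
        abel
      rw [h4]
      have h1 : (0 : ℝ) ≤ 1 - c i := by linarith [hc1 i]
      have h2 := h₂conv hym hyp h1 (hc0 i) (by ring)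
      have h3 : (1 - c i) • ym + c i • yp = ym + c i • f := by
        rw [hfdef, smul_sub, sub_smul, one_smul]
        abel
      rwa [h3] at h2
  refine ⟨φ, ⟨?_, ?_⟩, ?_, ?_, ?_⟩
  · rintro (i | j)
    · exact ⟨xm + c i0 • e + c i • f, ((hmemA i _).mpr (by
        rw [add_sub_cancel_right]
        have h1 : (0 : ℝ) ≤ 1 - c i0 := by linarith [hc1 i0]
        have h2 := h₁conv hxm hxp h1 (hc0 i0) (by ring)
        have h3 : (1 - c i0) • xm + c i0 • xp = xm + c i0 • e := by
          rw [hedef, smul_sub, sub_smul, one_smul]; abel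
        rwa [h3] at h2))⟩
    · exact ⟨xm + c j • e + c i0 • f, (hz i0 j).2⟩
  · rintro (i | j) (i' | j') huv
    · refine iff_of_false ?_ (by simp)
      rintro ⟨x, hx, hx'⟩
      exact hdisA i i' (fun h => huv (by rw [h])) x hx hx'
    · exact iff_of_true ⟨xm + c j' • e + c i • f, hz i j'⟩ (by simp)
    · exact iff_of_true ⟨xm + c j • e + c i' • f, (hz i' j).2, (hz i' j).1⟩ (by simp)
    · refine iff_of_false ?_ (by simp)
      rintro ⟨x, hx, hx'⟩
      exact hdisC j j' (fun h => huv (by rw [h])) x hx hx'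
  · intro x
    have hinj : Set.InjOn Sum.isLeft {w : Fin m ⊕ Fin m | x ∈ φ w} := by
      rintro (i | j) hu (i' | j') hv hh
      · have : i = i' := by
          by_contra hii
          exact hdisA i i' hii x hu hv
        rw [this]
      · simp at hh
      · simp at hh
      · have : j = j' := by
          by_contra hjj
          exact hdisC j j' hjj x hu hv
        rw [this]
    have h1 : {w : Fin m ⊕ Fin m | x ∈ φ w}.ncard ≤ 2 := by
      have h2 := Set.ncard_image_of_injOn hinj
      have h3 : (Sum.isLeft '' {w : Fin m ⊕ Fin m | x ∈ φ w}).ncard ≤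
          (Set.univ : Set Bool).ncard :=
        Set.ncard_le_ncard (Set.subset_univ _) Set.finite_univ
      rw [Set.ncard_univ, Nat.card_eq_fintype_card] at h3
      simp only [Fintype.card_bool] at h3
      omega
    exact_mod_cast Nat.cast_le.mpr h1
  · intro i
    exact ⟨c i • f, by rw [hφ]; simp⟩
  · intro j
    exact ⟨xm - ym + c j • e, by rw [hφ]; simp⟩

def coordL : Euc 1 →ₗ[ℝ] ℝ where
  toFun x := x 0
  map_add' _ _ := rfl
  map_smul' _ _ := rfl

def delta1 : Euc 1 := EuclideanSpace.single 0 1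

lemma oneDim_apply (L : Euc 1 →ₗ[ℝ] ℝ) (x : Euc 1) : L x = x 0 * L delta1 := by
  have hx : x = x 0 • delta1 := by
    ext j
    have hj : j = 0 := Subsingleton.elim j 0
    subst hj
    show x 0 = x 0 * delta1 0
    rw [delta1]
    rw [EuclideanSpace.single_apply]
    simp
  conv_lhs => rw [hx]
  rw [LinearMap.map_smul, smul_eq_mul]

lemma oneDimWid {B : Set (Euc 1)} (hc : IsCompact B) (hne : B.Nonempty)
    (L : Euc 1 →ₗ[ℝ] ℝ) : wid B L = |L delta1| * wid B coordL := by
  obtain ⟨p, hp, q, hq, heq, hmax, hmin⟩ := exists_wid_spec hc hne L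
  obtain ⟨p', hp', q', hq', heq', hmax', hmin'⟩ := exists_wid_spec hc hne coordL
  have hco : ∀ x : Euc 1, coordL x = x 0 := fun _ => rfl
  have hp'0 : ∀ x ∈ B, x 0 ≤ p' 0 := by
    intro x hx
    have := hmax' x hx
    rwa [hco, hco] at this
  have hq'0 : ∀ x ∈ B, q' 0 ≤ x 0 := by
    intro x hx
    have := hmin' x hx
    rwa [hco, hco] at this
  apply le_antisymm
  · rw [heq, heq', hco, hco]
    have h1 : L p - L q = (p 0 - q 0) * L delta1 := by
      rw [oneDim_apply L p, oneDim_apply L q]; ring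
    have h2 : |p 0 - q 0| ≤ p' 0 - q' 0 := by
      rw [abs_sub_le_iff]
      exact ⟨by linarith [hp'0 p hp, hq'0 q hq], by linarith [hp'0 q hq, hq'0 p hp]⟩
    calc L p - L q = (p 0 - q 0) * L delta1 := h1
      _ ≤ |(p 0 - q 0) * L delta1| := le_abs_self _
      _ = |p 0 - q 0| * |L delta1| := abs_mul _ _
      _ ≤ (p' 0 - q' 0) * |L delta1| := mul_le_mul_of_nonneg_right h2 (abs_nonneg _)
      _ = |L delta1| * (p' 0 - q' 0) := mul_comm _ _
  · rw [heq, heq', hco, hco]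
    rcases le_or_gt 0 (L delta1) with hpos | hneg
    · rw [abs_of_nonneg hpos]
      have h1 : L delta1 * (p' 0 - q' 0) = L p' - L q' := by
        rw [oneDim_apply L p', oneDim_apply L q']; ring
      have h2 : L p' ≤ L p := hmax p' hp'
      have h3 : L q ≤ L q' := hmin q' hq'
      linarith
    · rw [abs_of_neg hneg]
      have h1 : -L delta1 * (p' 0 - q' 0) = L q' - L p' := by
        rw [oneDim_apply L p', oneDim_apply L q']; ring
      have h2 : L q' ≤ L p := hmax q' hq'
      have h3 : L q ≤ L p' := hmin p' hp'
      linarith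

end Stmt3Aux

end AuxStmt3


theorem stmt3 (d : ℕ) (hd : 0 < d) (S : Set (Set (Euc d)))
    (hS : ∀ B ∈ S, Convex ℝ B ∧ IsShape B) (m : ℕ) (hm : 0 < m)
    (B₁ B₂ : Set (Euc d)) (hB₁ : B₁ ∈ S) (hB₂ : B₂ ∈ S)
    (h1 : ¬ LeK (2 * (d : ℝ) ^ ((5 : ℝ) / 2) * m) B₁ B₂)
    (h2 : ¬ LeK (2 * (d : ℝ) ^ ((5 : ℝ) / 2) * m) B₂ B₁) :
    ∃ φ : Fin m ⊕ Fin m → Set (Euc d),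
      IsIntersectionRep (completeBipartiteGraph (Fin m) (Fin m)) φ ∧
      IsThin 2 φ ∧ IsSShaped S φ := by
  
  classical
  have h₁conv : Convex ℝ B₁ := (hS B₁ hB₁).1
  have h₁cpt : IsCompact B₁ := (hS B₁ hB₁).2.1
  have h₁span : affineSpan ℝ B₁ = ⊤ := (hS B₁ hB₁).2.2
  have h₂conv : Convex ℝ B₂ := (hS B₂ hB₂).1
  have h₂cpt : IsCompact B₂ := (hS B₂ hB₂).2.1
  have h₂span : affineSpan ℝ B₂ = ⊤ := (hS B₂ hB₂).2.2
  have h₁ne : B₁.Nonempty := by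
    rw [← affineSpan_nonempty (k := ℝ), h₁span]
    exact ⟨0, AffineSubspace.mem_top ℝ (Euc d) 0⟩
  have h₂ne : B₂.Nonempty := by
    rw [← affineSpan_nonempty (k := ℝ), h₂span]
    exact ⟨0, AffineSubspace.mem_top ℝ (Euc d) 0⟩
  by_cases hm1 : m = 1
  · subst hm1
    obtain ⟨x₀, hx₀⟩ := h₁ne
    obtain ⟨y₀, hy₀⟩ := h₂ne
    refine ⟨Sum.elim (fun _ => (0 : Euc d) +ᵥ B₁) (fun _ => (x₀ - y₀) +ᵥ B₂),
      ⟨?_, ?_⟩, ?_, ?_⟩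
    · rintro (i | j)
      · exact ⟨(0 : Euc d) +ᵥ x₀, Set.vadd_mem_vadd_set hx₀⟩
      · exact ⟨(x₀ - y₀) +ᵥ y₀, Set.vadd_mem_vadd_set hy₀⟩
    · have hmem1 : x₀ ∈ (0 : Euc d) +ᵥ B₁ := by
        rw [Set.mem_vadd_set_iff_neg_vadd_mem, neg_zero, zero_vadd]
        exact hx₀
      have hmem2 : x₀ ∈ (x₀ - y₀) +ᵥ B₂ := by
        rw [Set.mem_vadd_set_iff_neg_vadd_mem, vadd_eq_add]
        have h5 : -(x₀ - y₀) + x₀ = y₀ := by abel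
        rwa [h5]
      rintro (i | j) (i' | j') huv
      · exact absurd (congrArg Sum.inl (Subsingleton.elim i i')) huv
      · exact iff_of_true ⟨x₀, hmem1, hmem2⟩ (by simp)
      · exact iff_of_true ⟨x₀, hmem2, hmem1⟩ (by simp)
      · exact absurd (congrArg Sum.inr (Subsingleton.elim j j')) huv
    · intro x
      have h1 : {v : Fin 1 ⊕ Fin 1 |
          x ∈ Sum.elim (fun _ => (0 : Euc d) +ᵥ B₁) (fun _ => (x₀ - y₀) +ᵥ B₂) v}.ncard ≤ 2 := by
        refine le_trans (Set.ncard_le_ncard (Set.subset_univ _) Set.finite_univ) ?_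
        rw [Set.ncard_univ, Nat.card_eq_fintype_card]
        simp
      exact_mod_cast Nat.cast_le.mpr h1
    · rintro (i | j)
      · exact ⟨B₁, hB₁, 0, rfl⟩
      · exact ⟨B₂, hB₂, x₀ - y₀, rfl⟩
  · have hm2 : 2 ≤ m := by omega
    have hdpos : (0 : ℝ) < d := by exact_mod_cast hd
    have hrp : (0 : ℝ) < (d : ℝ) ^ ((5 : ℝ) / 2) := Real.rpow_pos_of_pos hdpos _
    have hmpos : (0 : ℝ) < m := by exact_mod_cast hm
    have htpos : (0 : ℝ) < (d : ℝ) ^ ((5 : ℝ) / 2) * m / ((d : ℝ) + 1) := by positivity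
    have hkeq : 2 * ((d : ℝ) + 1) * ((d : ℝ) ^ ((5 : ℝ) / 2) * m / ((d : ℝ) + 1)) =
        2 * (d : ℝ) ^ ((5 : ℝ) / 2) * m := by
      field_simp
    obtain ⟨L₁, hL₁⟩ := Stmt3Aux.step1 h₁cpt h₁ne h₂conv h₂cpt h₂span htpos
      (by rw [hkeq]; exact h1)
    obtain ⟨L₂, hL₂⟩ := Stmt3Aux.step1 h₂cpt h₂ne h₁conv h₁cpt h₁span htpos
      (by rw [hkeq]; exact h2)
    by_cases hd2 : 2 ≤ d
    · have hd2' : (2 : ℝ) ≤ (d : ℝ) := by exact_mod_cast hd2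
      set D : ℝ := (d : ℝ) ^ ((5 : ℝ) / 2) with hD
      have hexp : (d : ℝ) * (d : ℝ) ≤ D := by
        have e1 : (d : ℝ) ^ (2 : ℝ) ≤ (d : ℝ) ^ ((5 : ℝ) / 2) :=
          Real.rpow_le_rpow_of_exponent_le (by linarith) (by norm_num)
        have e2 : (d : ℝ) ^ (2 : ℝ) = (d : ℝ) * (d : ℝ) := by
          rw [show (2 : ℝ) = ((2 : ℕ) : ℝ) by norm_num, Real.rpow_natCast]
          ring
        rw [hD, ← e2]
        exact e1
      have hdd : (d : ℝ) * 2 ≤ (d : ℝ) * (d : ℝ) :=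
        mul_le_mul_of_nonneg_left hd2' (by linarith)
      have hd52 : (d : ℝ) + 1 ≤ D := by linarith
      have htm : (m : ℝ) ≤ D * m / ((d : ℝ) + 1) := by
        rw [le_div_iff₀ (by positivity)]
        nlinarith [hd52, hmpos]
      have hA : (m : ℝ) * Stmt3Aux.wid B₂ L₁ < Stmt3Aux.wid B₁ L₁ :=
        lt_of_le_of_lt
          (mul_le_mul_of_nonneg_right htm (Stmt3Aux.wid_nonneg h₂cpt h₂ne L₁)) hL₁
      have hB : (m : ℝ) * Stmt3Aux.wid B₁ L₂ < Stmt3Aux.wid B₂ L₂ :=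
        lt_of_le_of_lt
          (mul_le_mul_of_nonneg_right htm (Stmt3Aux.wid_nonneg h₁cpt h₁ne L₂)) hL₂
      obtain ⟨φ, hrep, hthin, hA', hB'⟩ :=
        Stmt3Aux.construct hm h₁conv h₁cpt h₁ne h₂conv h₂cpt h₂ne hA hB
      refine ⟨φ, hrep, hthin, ?_⟩
      rintro (i | j)
      · obtain ⟨tt, htt⟩ := hA' i
        exact ⟨B₁, hB₁, tt, htt⟩
      · obtain ⟨tt, htt⟩ := hB' j
        exact ⟨B₂, hB₂, tt, htt⟩
    · exfalso
      have hd1 : d = 1 := by omega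
      subst hd1
      have ht1 : (1 : ℝ) ≤ (1 : ℕ) ^ ((5 : ℝ) / 2) * m / (((1 : ℕ) : ℝ) + 1) := by
        simp only [Nat.cast_one, Real.one_rpow, one_mul]
        rw [le_div_iff₀ (by norm_num)]
        have h6 : (2 : ℝ) ≤ m := by exact_mod_cast hm2
        linarith
      have hA : Stmt3Aux.wid B₂ L₁ < Stmt3Aux.wid B₁ L₁ :=
        lt_of_le_of_lt
          (le_mul_of_one_le_left (Stmt3Aux.wid_nonneg h₂cpt h₂ne L₁) ht1) hL₁
      have hB : Stmt3Aux.wid B₁ L₂ < Stmt3Aux.wid B₂ L₂ :=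
        lt_of_le_of_lt
          (le_mul_of_one_le_left (Stmt3Aux.wid_nonneg h₁cpt h₁ne L₂) ht1) hL₂
      rw [Stmt3Aux.oneDimWid h₂cpt h₂ne L₁, Stmt3Aux.oneDimWid h₁cpt h₁ne L₁] at hA
      rw [Stmt3Aux.oneDimWid h₁cpt h₁ne L₂, Stmt3Aux.oneDimWid h₂cpt h₂ne L₂] at hB
      have h01 := lt_of_mul_lt_mul_left hA (abs_nonneg (L₁ Stmt3Aux.delta1))
      have h02 := lt_of_mul_lt_mul_left hB (abs_nonneg (L₂ Stmt3Aux.delta1))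
      linarith
end

section
/- Every convex shape B in ℝ^d of height h contains a closed ball of diameter h/d. -/
open MeasureTheory Set Pointwise Metric Function
open scoped RealInnerProductSpace ENNReal

noncomputable def supf {d : ℕ} (B : Set (Euc d)) (z u : Euc d) : ℝ :=
  sSup ((fun x => ⟪u, x - z⟫) '' B)

lemma supf_bddAbove {d : ℕ} {B : Set (Euc d)} (hB : IsCompact B) (z u : Euc d) :
    BddAbove ((fun x => ⟪u, x - z⟫) '' B) :=
  hB.bddAbove_image
    ((continuous_const.inner (continuous_id.sub continuous_const)).continuousOn)

lemma inner_le_supf {d : ℕ} {B : Set (Euc d)} (hB : IsCompact B) (z u : Euc d)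
    {x : Euc d} (hx : x ∈ B) : ⟪u, x - z⟫ ≤ supf B z u :=
  le_csSup (supf_bddAbove hB z u) ⟨x, hx, rfl⟩

lemma supf_le {d : ℕ} {B : Set (Euc d)} (hne : B.Nonempty) (z u : Euc d) {c : ℝ}
    (h : ∀ x ∈ B, ⟪u, x - z⟫ ≤ c) : supf B z u ≤ c :=
  csSup_le (hne.image _) (by rintro y ⟨x, hx, rfl⟩; exact h x hx)

lemma supf_sub_le {d : ℕ} {B : Set (Euc d)} (hne : B.Nonempty) (hB : IsCompact B)
    (z : Euc d) {M : ℝ} (hM : ∀ x ∈ B, ‖x - z‖ ≤ M) (u u' : Euc d) :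
    supf B z u - supf B z u' ≤ M * ‖u - u'‖ := by
  rw [sub_le_iff_le_add]
  apply supf_le hne
  intro x hx
  have h1 : ⟪u, x - z⟫ = ⟪u', x - z⟫ + ⟪u - u', x - z⟫ := by
    rw [← inner_add_left, add_sub_cancel]
  have h2 : ⟪u - u', x - z⟫ ≤ ‖u - u'‖ * ‖x - z‖ := real_inner_le_norm _ _
  have h3 : ‖u - u'‖ * ‖x - z‖ ≤ ‖u - u'‖ * M :=
    mul_le_mul_of_nonneg_left (hM x hx) (norm_nonneg _)
  have h4 : ⟪u', x - z⟫ ≤ supf B z u' := inner_le_supf hB z u' hx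
  linarith [mul_comm M ‖u - u'‖]

lemma supf_continuous {d : ℕ} {B : Set (Euc d)} (hne : B.Nonempty) (hB : IsCompact B)
    (z : Euc d) {M : ℝ} (hM : ∀ x ∈ B, ‖x - z‖ ≤ M) : Continuous (supf B z) := by
  have : LipschitzWith (Real.toNNReal M) (supf B z) := by
    apply LipschitzWith.of_dist_le_mul
    intro u u'
    have hMM : M * ‖u - u'‖ ≤ (Real.toNNReal M : ℝ) * ‖u - u'‖ :=
      mul_le_mul_of_nonneg_right (Real.le_coe_toNNReal M) (norm_nonneg _)
    rw [Real.dist_eq, abs_sub_le_iff, dist_eq_norm]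
    constructor
    · exact le_trans (supf_sub_le hne hB z hM u u') hMM
    · refine le_trans (supf_sub_le hne hB z hM u' u) ?_
      rw [norm_sub_rev u' u]
      exact mul_le_mul_of_nonneg_right (Real.le_coe_toNNReal M) (norm_nonneg _)
  exact this.continuous

lemma closedBall_subset_iff_param {d : ℕ} (B : Set (Euc d)) (z : Euc d) {ρ : ℝ} (hρ : 0 ≤ ρ) :
    closedBall z ρ ⊆ B ↔ ∀ v ∈ closedBall (0 : Euc d) 1, z + ρ • v ∈ B := by
  constructor
  · intro h v hv
    apply h
    rw [mem_closedBall, dist_eq_norm, add_sub_cancel_left, norm_smul, Real.norm_eq_abs,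
      abs_of_nonneg hρ]
    rw [mem_closedBall, dist_zero_right] at hv
    calc ρ * ‖v‖ ≤ ρ * 1 := mul_le_mul_of_nonneg_left hv hρ
    _ = ρ := mul_one ρ
  · intro h x hx
    rcases eq_or_lt_of_le hρ with h0 | h0
    · have hxz : x = z := by
        rw [mem_closedBall, ← h0, dist_le_zero] at hx; exact hx
      have hz : z ∈ B := by simpa using h 0 (by simp)
      rwa [hxz]
    · have hv : ρ⁻¹ • (x - z) ∈ closedBall (0 : Euc d) 1 := by
        rw [mem_closedBall, dist_zero_right, norm_smul, Real.norm_eq_abs,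
          abs_of_nonneg (inv_nonneg.mpr hρ)]
        rw [mem_closedBall, dist_eq_norm] at hx
        calc ρ⁻¹ * ‖x - z‖ ≤ ρ⁻¹ * ρ := mul_le_mul_of_nonneg_left hx (inv_nonneg.mpr hρ)
        _ = 1 := inv_mul_cancel₀ (ne_of_gt h0)
      have := h _ hv
      rwa [smul_smul, mul_inv_cancel₀ (ne_of_gt h0), one_smul, add_sub_cancel] at this


set_option maxHeartbeats 2000000 in
theorem stmt4 (d : ℕ) (hd : 0 < d) (B : Set (Euc d)) (hB : Convex ℝ B)
    (hshape : IsShape B) :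
    ∃ z : Euc d, Metric.closedBall z (heightOf B / (2 * d)) ⊆ B := by
  obtain ⟨hcomp, hspan⟩ := hshape
  haveI : DecidableEq (Euc d) := Classical.decEq _
  have hne : B.Nonempty := by
    rcases Set.eq_empty_or_nonempty B with h | h
    · exfalso
      rw [h, AffineSubspace.span_empty] at hspan
      have : (0 : Euc d) ∈ (⊥ : AffineSubspace ℝ (Euc d)) :=
        hspan ▸ AffineSubspace.mem_top ℝ _ 0
      exact (AffineSubspace.notMem_bot ℝ _ _) this
    · exact h
  obtain ⟨R, hR⟩ := hcomp.isBounded.subset_closedBall 0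
  set e : Euc d := EuclideanSpace.single ⟨0, hd⟩ (1:ℝ) with he
  have hee : ‖e‖ = 1 := by rw [he, EuclideanSpace.norm_single]; norm_num
  set K : Set (Euc d × ℝ) := {p | 0 ≤ p.2 ∧ Metric.closedBall p.1 p.2 ⊆ B} with hKdef
  have hKsub : K ⊆ Metric.closedBall 0 R ×ˢ Set.Icc (0:ℝ) (2*R) := by
    rintro ⟨z, ρ⟩ ⟨h0, hsub⟩
    have hz : z ∈ B := hsub (Metric.mem_closedBall_self h0)
    refine ⟨hR hz, h0, ?_⟩
    have h1 : z + ρ • e ∈ B := hsub (by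
      rw [Metric.mem_closedBall, dist_eq_norm, add_sub_cancel_left, norm_smul, hee]
      simp [abs_of_nonneg h0])
    have h2 := hR h1
    have h3 := hR hz
    rw [Metric.mem_closedBall, dist_zero_right] at h2 h3
    have h4 : ρ = ‖(z + ρ • e) - z‖ := by
      rw [add_sub_cancel_left, norm_smul, hee]; simp [abs_of_nonneg h0]
    calc ρ = ‖(z + ρ • e) - z‖ := h4
      _ ≤ ‖z + ρ • e‖ + ‖z‖ := norm_sub_le _ _
      _ ≤ R + R := add_le_add h2 h3
      _ = 2*R := by ring
  have hKclosed : IsClosed K := by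
    have hKeq : K = {p : Euc d × ℝ | 0 ≤ p.2} ∩
        ⋂ v ∈ Metric.closedBall (0:Euc d) 1, {p : Euc d × ℝ | p.1 + p.2 • v ∈ B} := by
      ext ⟨z, ρ⟩
      simp only [Set.mem_inter_iff, Set.mem_iInter, Set.mem_setOf_eq, hKdef]
      constructor
      · rintro ⟨h1, h2⟩
        exact ⟨h1, fun v hv => (closedBall_subset_iff_param B z h1).1 h2 v hv⟩
      · rintro ⟨h1, h2⟩
        exact ⟨h1, (closedBall_subset_iff_param B z h1).2 h2⟩
    rw [hKeq]
    refine (isClosed_le continuous_const continuous_snd).inter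
      (isClosed_biInter fun v hv => IsClosed.preimage ?_ hcomp.isClosed)
    exact continuous_fst.add (continuous_snd.smul continuous_const)
  have hKcomp : IsCompact K := by
    refine Metric.isCompact_of_isClosed_isBounded hKclosed ?_
    exact ((Metric.isBounded_closedBall).prod (Metric.isBounded_Icc _ _)).subset hKsub
  have hKne : K.Nonempty := by
    obtain ⟨b, hb⟩ := hne
    exact ⟨(b, 0), le_rfl, by rw [Metric.closedBall_zero]; simpa using hb⟩
  obtain ⟨⟨z, r⟩, hzrK, hmax⟩ := hKcomp.exists_isMaxOn hKne continuous_snd.continuousOn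
  obtain ⟨hr0, hball⟩ := hzrK
  -- support function
  set f : Euc d → ℝ := supf B z with hfdef
  set M : ℝ := R + R with hMdef
  have hM : ∀ x ∈ B, ‖x - z‖ ≤ M := by
    intro x hx
    have h1 := hR hx
    have h2 := hR (hball (Metric.mem_closedBall_self hr0))
    rw [Metric.mem_closedBall, dist_zero_right] at h1 h2
    calc ‖x - z‖ ≤ ‖x‖ + ‖z‖ := norm_sub_le _ _
      _ ≤ M := add_le_add h1 h2
  have hM0 : 0 ≤ M := by
    obtain ⟨b, hb⟩ := hne
    exact le_trans (norm_nonneg _) (hM b hb)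
  have hfc : Continuous f := supf_continuous hne hcomp z hM
  have hfr : ∀ u : Euc d, ‖u‖ = 1 → r ≤ f u := by
    intro u hu
    have hmem : z + r • u ∈ B := hball (by
      rw [Metric.mem_closedBall, dist_eq_norm, add_sub_cancel_left, norm_smul, hu]
      simp [abs_of_nonneg hr0])
    have := inner_le_supf hcomp z u hmem
    rwa [add_sub_cancel_left, real_inner_smul_right, real_inner_self_eq_norm_sq, hu,
      one_pow, mul_one] at this
  set D : Set (Euc d) := {u | ‖u‖ = 1 ∧ f u = r} with hDdef
  by_cases hw : ∃ w : Euc d, ∀ u ∈ D, ⟪w, u⟫ < 0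
  · exfalso
    obtain ⟨w, hwD⟩ := hw
    have hsph : IsCompact (Metric.sphere (0:Euc d) 1) := isCompact_sphere 0 1
    have hsphne : (Metric.sphere (0:Euc d) 1).Nonempty :=
      ⟨e, (mem_sphere_zero_iff_norm).2 hee⟩
    have hfruniv : ∀ u ∈ Metric.sphere (0:Euc d) 1, r ≤ f u := fun u hu =>
      hfr u ((mem_sphere_zero_iff_norm).1 hu)
    have hclaim : ∃ ε > (0:ℝ), ∀ u ∈ Metric.sphere (0:Euc d) 1, r < f u - ε * ⟪w, u⟫ := by
      set S' := Metric.sphere (0:Euc d) 1 ∩ {u : Euc d | 0 ≤ ⟪w, u⟫} with hS'def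
      have hS'c : IsCompact S' := hsph.inter_right
        (isClosed_le continuous_const (continuous_const.inner continuous_id))
      rcases S'.eq_empty_or_nonempty with hS' | hS'
      · refine ⟨1, one_pos, fun u hu => ?_⟩
        have h1 : ¬ (0 ≤ ⟪w, u⟫) := fun h => (Set.eq_empty_iff_forall_notMem.1 hS' u) ⟨hu, h⟩
        push_neg at h1
        have := hfruniv u hu
        nlinarith
      · obtain ⟨u₀, hu₀, hmin⟩ := hS'c.exists_isMinOn hS' hfc.continuousOn
        have hu₀D : u₀ ∉ D := fun hD => absurd (hwD u₀ hD) (not_lt.mpr hu₀.2)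
        have hδ : 0 < f u₀ - r := by
          have h1 := hfruniv u₀ hu₀.1
          rcases eq_or_lt_of_le h1 with h | h
          · exact absurd ⟨(mem_sphere_zero_iff_norm).1 hu₀.1, h.symm⟩ hu₀D
          · linarith
        refine ⟨(f u₀ - r) / (2 * (‖w‖ + 1)), by positivity, ?_⟩
        intro u hu
        rcases le_or_gt 0 ⟪w, u⟫ with hc | hc
        · have h1 : f u₀ ≤ f u := hmin ⟨hu, hc⟩
          have h2 : ⟪w, u⟫ ≤ ‖w‖ := by
            have h := real_inner_le_norm w u
            rwa [(mem_sphere_zero_iff_norm).1 hu, mul_one] at h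
          have h3 : (f u₀ - r) / (2 * (‖w‖ + 1)) * ⟪w, u⟫ ≤
              (f u₀ - r) / (2 * (‖w‖ + 1)) * ‖w‖ :=
            mul_le_mul_of_nonneg_left h2 (by positivity)
          have h4 : (f u₀ - r) / (2 * (‖w‖ + 1)) * ‖w‖ < f u₀ - r := by
            rw [div_mul_eq_mul_div, div_lt_iff₀ (by positivity)]
            nlinarith [norm_nonneg w]
          linarith
        · have h1 := hfruniv u hu
          have h2 : (f u₀ - r) / (2 * (‖w‖ + 1)) * ⟪w, u⟫ < 0 :=
            mul_neg_of_pos_of_neg (by positivity) hc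
          linarith
    obtain ⟨ε, hε, hεlt⟩ := hclaim
    set g : Euc d → ℝ := fun u => f u - ε * ⟪w, u⟫ with hgdef
    have hgc : Continuous g := hfc.sub (continuous_const.mul
      (continuous_const.inner continuous_id))
    obtain ⟨u₁, hu₁, hgmin⟩ := hsph.exists_isMinOn hsphne hgc.continuousOn
    set r' := g u₁ with hr'def
    have hr' : r < r' := hεlt u₁ hu₁
    have hsubB : Metric.closedBall (z + ε • w) r' ⊆ B := by
      intro x hx
      by_contra hxB
      obtain ⟨φ, c, hφc, hφx⟩ := geometric_hahn_banach_closed_point hB hcomp.isClosed hxB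
      set v := (InnerProductSpace.toDual ℝ (Euc d)).symm φ with hvdef
      have hv : ∀ y : Euc d, ⟪v, y⟫ = φ y := fun y => InnerProductSpace.toDual_symm_apply
      have hvne : v ≠ 0 := by
        intro h0
        obtain ⟨b, hb⟩ := hne
        have h1 : φ b < c := hφc b hb
        have h2 : φ b = 0 := by rw [← hv b, h0, inner_zero_left]
        have h3 : φ x = 0 := by rw [← hv x, h0, inner_zero_left]
        linarith [hφx]
      set u : Euc d := ‖v‖⁻¹ • v with hudef
      have hvpos : 0 < ‖v‖ := norm_pos_iff.mpr hvne
      have hu : ‖u‖ = 1 := norm_smul_inv_norm hvne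
      have husph : u ∈ Metric.sphere (0:Euc d) 1 := (mem_sphere_zero_iff_norm).2 hu
      have h1 : f u ≤ ‖v‖⁻¹ * (c - ⟪v, z⟫) := by
        apply supf_le hne
        intro b hb
        have he1 : ⟪u, b - z⟫ = ‖v‖⁻¹ * (⟪v, b⟫ - ⟪v, z⟫) := by
          rw [hudef, real_inner_smul_left, inner_sub_right]
        rw [he1]
        have hlt : ⟪v, b⟫ ≤ c := le_of_lt (by rw [hv b]; exact hφc b hb)
        exact mul_le_mul_of_nonneg_left (by linarith) (le_of_lt (inv_pos.mpr hvpos))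
      have h2 : ‖v‖⁻¹ * (c - ⟪v, z⟫) < ⟪u, x - z⟫ := by
        have he1 : ⟪u, x - z⟫ = ‖v‖⁻¹ * (⟪v, x⟫ - ⟪v, z⟫) := by
          rw [hudef, real_inner_smul_left, inner_sub_right]
        rw [he1]
        have hlt : c < ⟪v, x⟫ := by rw [hv x]; exact hφx
        exact mul_lt_mul_of_pos_left (by linarith) (inv_pos.mpr hvpos)
      have h3 : ⟪u, x - z⟫ ≤ r' + ε * ⟪w, u⟫ := by
        have ha : ⟪u, x - z⟫ = ⟪u, x - (z + ε • w)⟫ + ε * ⟪u, w⟫ := by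
          rw [← real_inner_smul_right, ← inner_add_right]
          congr 1
          abel
        have hb' : ⟪u, x - (z + ε • w)⟫ ≤ r' := by
          have hcs := real_inner_le_norm u (x - (z + ε • w))
          rw [hu, one_mul] at hcs
          refine le_trans hcs ?_
          rw [← dist_eq_norm]
          exact hx
        calc ⟪u, x - z⟫ = ⟪u, x - (z + ε • w)⟫ + ε * ⟪u, w⟫ := ha
          _ ≤ r' + ε * ⟪u, w⟫ := by linarith
          _ = r' + ε * ⟪w, u⟫ := by rw [real_inner_comm]
      have h4 : r' ≤ f u - ε * ⟪w, u⟫ := hgmin husph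
      linarith
    have hmemK : (z + ε • w, r') ∈ K := ⟨le_of_lt (lt_of_le_of_lt hr0 hr'), hsubB⟩
    exact absurd (hmax hmemK) (not_le.mpr hr')
  · push_neg at hw
    have hd1 : (1:ℝ) ≤ d := by exact_mod_cast hd
    have h0mem : (0:Euc d) ∈ closure (convexHull ℝ D) := by
      by_contra h0
      obtain ⟨φ, c, hφ0, hφ⟩ := geometric_hahn_banach_point_closed
        ((convex_convexHull ℝ D).closure) isClosed_closure h0
      set v := (InnerProductSpace.toDual ℝ (Euc d)).symm φ with hvdef
      have hv : ∀ y : Euc d, ⟪v, y⟫ = φ y := fun y => InnerProductSpace.toDual_symm_apply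
      obtain ⟨u, huD, hu0⟩ := hw (-v)
      have h1 : c < φ u := hφ u (subset_closure (subset_convexHull ℝ D huD))
      have h2 : φ (0:Euc d) = 0 := map_zero φ
      have h3 : ⟪-v, u⟫ = - φ u := by rw [inner_neg_left, hv u]
      rw [h3] at hu0
      rw [h2] at hφ0
      linarith
    have hfin : ∀ ε > (0:ℝ), heightOf B ≤ 2*d*r + ε := by
      intro ε hε
      set δ : ℝ := ε / ((d+1) * (M+1)) with hδdef
      have hδpos : 0 < δ := by
        rw [hδdef]
        positivity
      obtain ⟨y, hyH, hyδ⟩ := Metric.mem_closure_iff.1 h0mem δ hδpos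
      rw [dist_zero_left] at hyδ
      have hyH2 : y ∈ ⋃ (t : Finset (Euc d)) (_ : ↑t ⊆ D)
          (_ : AffineIndependent ℝ ((↑) : t → Euc d)), convexHull ℝ (↑t : Set (Euc d)) := by
        rw [← convexHull_eq_union]; exact hyH
      obtain ⟨t, ht⟩ := Set.mem_iUnion.1 hyH2
      obtain ⟨htD, ht2⟩ := Set.mem_iUnion.1 ht
      obtain ⟨hai, ht3⟩ := Set.mem_iUnion.1 ht2
      rw [Finset.convexHull_eq] at ht3
      obtain ⟨ww, hwnn, hwsum, hwcm⟩ := ht3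
      rw [Finset.centerMass_eq_of_sum_1 _ _ hwsum] at hwcm
      have hcard : t.card ≤ d + 1 := by
        have h1 := hai.card_le_finrank_succ
        rw [Fintype.card_coe] at h1
        have h2 : Module.finrank ℝ (vectorSpan ℝ (Set.range ((↑) : t → Euc d))) ≤
            Module.finrank ℝ (Euc d) := Submodule.finrank_le _
        rw [finrank_euclideanSpace_fin] at h2
        omega
      have htne : t.Nonempty := by
        rcases t.eq_empty_or_nonempty with h | h
        · rw [h, Finset.sum_empty] at hwsum; norm_num at hwsum
        · exact h
      obtain ⟨i₀, hi₀t, hmaxw⟩ := Finset.exists_max_image t ww htne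
      set lam := ww i₀ with hlamdef
      have hlamnn : 0 ≤ lam := hwnn i₀ hi₀t
      have hlamle : lam ≤ 1 := by
        rw [← hwsum]
        exact Finset.single_le_sum hwnn hi₀t
      have hinv : 1 ≤ ((d:ℝ)+1) * lam := by
        have h2 : ∑ i ∈ t, ww i ≤ ∑ _i ∈ t, lam :=
          Finset.sum_le_sum (fun i hi => hmaxw i hi)
        have h3 : ∑ _i ∈ t, lam = (t.card : ℝ) * lam := by
          rw [Finset.sum_const, nsmul_eq_mul]
        have h4 : (t.card : ℝ) * lam ≤ ((d:ℝ)+1) * lam := by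
          apply mul_le_mul_of_nonneg_right _ hlamnn
          exact_mod_cast hcard
        rw [h3] at h2
        linarith [hwsum]
      have hlampos : 0 < lam := by nlinarith [hinv, hd1]
      have hu₀D : i₀ ∈ D := htD hi₀t
      have hu₀n : ‖i₀‖ = 1 := hu₀D.1
      set Q : ℝ := (1 - lam) * r + δ * (M + 1) with hQdef
      have hQ0 : 0 ≤ Q := by
        have h5 : 0 ≤ (1 - lam) * r := mul_nonneg (by linarith) hr0
        have h6 : 0 ≤ δ * (M + 1) := mul_nonneg (le_of_lt hδpos) (by linarith)
        linarith
      have hkey : ∀ x ∈ B, -Q ≤ lam * ⟪i₀, x - z⟫ ∧ ⟪i₀, x - z⟫ ≤ r := by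
        intro x hx
        have hub : ∀ i ∈ t, ⟪i, x - z⟫ ≤ r := by
          intro i hi
          have hiD : i ∈ D := htD hi
          rw [← hiD.2]
          exact inner_le_supf hcomp z i hx
        refine ⟨?_, hub i₀ hi₀t⟩
        have hsumeq : ∑ i ∈ t, ww i * ⟪i, x - z⟫ = ⟪y, x - z⟫ := by
          rw [← hwcm, sum_inner]
          refine Finset.sum_congr rfl (fun i _ => ?_)
          simp only [id_eq, real_inner_smul_left]
        have hylb : -(δ * (M+1)) ≤ ⟪y, x - z⟫ := by
          have hcs2 := abs_real_inner_le_norm y (x - z)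
          have h7 : ‖y‖ * ‖x - z‖ ≤ δ * (M+1) := by
            apply mul_le_mul (le_of_lt hyδ) _ (norm_nonneg _) (le_of_lt hδpos)
            linarith [hM x hx]
          have h8 := abs_le.1 hcs2
          linarith [h8.1]
        have hsp : ww i₀ * ⟪i₀, x - z⟫ + ∑ i ∈ t.erase i₀, ww i * ⟪i, x - z⟫ =
            ∑ i ∈ t, ww i * ⟪i, x - z⟫ :=
          Finset.add_sum_erase t (fun i => ww i * ⟪i, x - z⟫) hi₀t
        have herasele : ∑ i ∈ t.erase i₀, ww i * ⟪i, x - z⟫ ≤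
            ∑ i ∈ t.erase i₀, ww i * r :=
          Finset.sum_le_sum (fun i hi => mul_le_mul_of_nonneg_left
            (hub i (Finset.mem_of_mem_erase hi)) (hwnn i (Finset.mem_of_mem_erase hi)))
        have heraser : ∑ i ∈ t.erase i₀, ww i * r = (1 - lam) * r := by
          rw [← Finset.sum_mul]
          have hsp2 := Finset.add_sum_erase t ww hi₀t
          rw [hwsum] at hsp2
          have h9 : ∑ i ∈ t.erase i₀, ww i = 1 - lam := by linarith
          rw [h9]
        rw [hsumeq] at hsp
        have hQeq : -Q = -(δ * (M+1)) - (1 - lam) * r := by rw [hQdef]; ring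
        rw [hQeq]
        have h10 : lam * ⟪i₀, x - z⟫ =
            ⟪y, x - z⟫ - ∑ i ∈ t.erase i₀, ww i * ⟪i, x - z⟫ := by
          rw [← hsp]; ring
        rw [h10]
        linarith
      have hQdiv : Q / lam ≤ ((d:ℝ)+1) * Q := by
        rw [div_le_iff₀ hlampos]
        nlinarith [hQ0, hinv]
      have hA : ((d:ℝ)+1) * Q ≤ (d:ℝ)*r + ε := by
        have h6 : ((d:ℝ)+1)*((1-lam)*r) ≤ (d:ℝ)*r := by nlinarith [hinv, hr0]
        have h7 : ((d:ℝ)+1)*(δ*(M+1)) = ε := by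
          rw [hδdef]
          field_simp
        have h8 : ((d:ℝ)+1) * Q = ((d:ℝ)+1)*((1-lam)*r) + ((d:ℝ)+1)*(δ*(M+1)) := by
          rw [hQdef]; ring
        linarith
      apply csInf_le
      · exact ⟨0, fun h hh => hh.1⟩
      · have h20 : 0 ≤ 2*(d:ℝ)*r := by
          have h21 : (0:ℝ) ≤ (d:ℝ) := Nat.cast_nonneg d
          nlinarith
        refine ⟨by linarith, i₀, hu₀n, ⟪i₀, z⟫ - Q / lam, fun x hx => ?_⟩
        obtain ⟨hk1, hk2⟩ := hkey x hx
        rw [inner_sub_right] at hk1 hk2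
        have hQl : lam * (Q / lam) = Q := mul_div_cancel₀ Q (ne_of_gt hlampos)
        constructor
        · nlinarith [hk1, hQl, hlampos]
        · have h11 : Q / lam ≤ (d:ℝ)*r + ε := le_trans hQdiv hA
          have h12 : r + Q / lam ≤ 2*(d:ℝ)*r + ε := by
            have h13 : 0 ≤ ((d:ℝ) - 1) * r := mul_nonneg (by linarith) hr0
            linarith
          linarith
    have hh2 : heightOf B ≤ 2*d*r := le_of_forall_pos_le_add hfin
    refine ⟨z, fun x hx => hball (Metric.closedBall_subset_closedBall ?_ hx)⟩
    have h2d : (0:ℝ) < 2*(d:ℝ) := by linarith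
    rw [div_le_iff₀ h2d]
    nlinarith [hh2]
end
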